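/- arXiv:1206.5221 — 3 statements merged into one kernel-verified Lean document; each statement's English description precedes it below -/
import Mathlib

section
/- In the Hecke–Kiselman monoid H_K of the digraph K (vertices a,b,c,d; edges a—b, c—d; arrows a→c, a→d, b→c, b→d), for every element y of the submonoid generated by c and d, one has a·y = a·y·a and b·y = b·y·b. -/
open FreeMonoid
/-- The four vertices `a, b, c, d` of the digraph `K`. -/
inductive V4 : Type | a | b | c | d
open V4
/-- Defining relations of the Hecke–Kiselman monoid of `K`: edges `a—b`, `c—d`,
arrows `a→c`, `a→d`, `b→c`, `b→d`. -/
inductive KRel : FreeMonoid V4 → FreeMonoid V4 → Prop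
  | idem (x : V4) : KRel (of x * of x) (of x)
  | braid_ab : KRel (of a * of b * of a) (of b * of a * of b)
  | braid_cd : KRel (of c * of d * of c) (of d * of c * of d)
  | ac₁ : KRel (of a * of c) (of a * of c * of a)
  | ac₂ : KRel (of a * of c) (of c * of a * of c)
  | ad₁ : KRel (of a * of d) (of a * of d * of a)
  | ad₂ : KRel (of a * of d) (of d * of a * of d)
  | bc₁ : KRel (of b * of c) (of b * of c * of b)
  | bc₂ : KRel (of b * of c) (of c * of b * of c)
  | bd₁ : KRel (of b * of d) (of b * of d * of b)
  | bd₂ : KRel (of b * of d) (of d * of b * of d)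
/-- The Hecke–Kiselman monoid `H_K`. -/
abbrev HKK : Type := (conGen KRel).Quotient
/-- Images of the generators in `H_K`. -/
def ga : HKK := Con.mk' _ (of a)
def gb : HKK := Con.mk' _ (of b)
def gc : HKK := Con.mk' _ (of c)
def gd : HKK := Con.mk' _ (of d)
lemma hkk_rel {x y : FreeMonoid V4} (h : KRel x y) :
    (Con.mk' (conGen KRel) x : HKK) = Con.mk' _ y :=
  (Con.eq _).2 (ConGen.Rel.of _ _ h)
lemma ga_idem : ga * ga = ga := hkk_rel (KRel.idem a)
lemma gb_idem : gb * gb = gb := hkk_rel (KRel.idem b)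
lemma gac : ga * gc = ga * gc * ga := hkk_rel KRel.ac₁
lemma gad : ga * gd = ga * gd * ga := hkk_rel KRel.ad₁
lemma gbc : gb * gc = gb * gc * gb := hkk_rel KRel.bc₁
lemma gbd : gb * gd = gb * gd * gb := hkk_rel KRel.bd₁
/-- In `H_K`, for every `y` in the submonoid generated by `c` and `d`,
`a·y = a·y·a` and `b·y = b·y·b`. -/
theorem hkK_left_absorb (y : HKK) (hy : y ∈ Submonoid.closure {gc, gd}) :
    ga * y = ga * y * ga ∧ gb * y = gb * y * gb := by
  induction hy using Submonoid.closure_induction with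
  | mem x hx =>
    rcases hx with rfl | rfl
    · exact ⟨gac, gbc⟩
    · exact ⟨gad, gbd⟩
  | one => simpa using ⟨ga_idem.symm, gb_idem.symm⟩
  | mul x z _ _ hx hz =>
    constructor
    · calc ga * (x * z) = ga * x * z := by rw [mul_assoc]
        _ = ga * x * ga * z := by rw [← hx.1]
        _ = ga * x * (ga * z) := by rw [mul_assoc]
        _ = ga * x * (ga * z * ga) := by rw [← hz.1]
        _ = ga * x * ga * z * ga := by rw [← mul_assoc, ← mul_assoc]
        _ = ga * x * z * ga := by rw [← hx.1]
        _ = ga * (x * z) * ga := by rw [mul_assoc ga]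
    · calc gb * (x * z) = gb * x * z := by rw [mul_assoc]
        _ = gb * x * gb * z := by rw [← hx.2]
        _ = gb * x * (gb * z) := by rw [mul_assoc]
        _ = gb * x * (gb * z * gb) := by rw [← hz.2]
        _ = gb * x * gb * z * gb := by rw [← mul_assoc, ← mul_assoc]
        _ = gb * x * z * gb := by rw [← hx.2]
        _ = gb * (x * z) * gb := by rw [mul_assoc gb]
end

section
/- In the Hecke–Kiselman monoid H_K of K (vertices a,b,c,d; edges a—b, c—d; arrows a→c, a→d, b→c, b→d), for every element z of the submonoid generated by a and b, one has c·z·c = z·c and d·z·d = z·d. -/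
open FreeMonoid

open V4

/-- In `H_K`, for every `z` in the submonoid generated by `a` and `b`,
`c·z·c = z·c` and `d·z·d = z·d`. -/
theorem hkK_right_absorb (z : HKK) (hz : z ∈ Submonoid.closure {ga, gb}) :
    gc * z * gc = z * gc ∧ gd * z * gd = z * gd := by
  have krel : ∀ {x y : FreeMonoid V4}, KRel x y →
      (Con.mk' (conGen KRel) x : HKK) = Con.mk' _ y :=
    fun h => (Con.eq _).mpr (ConGen.Rel.of _ _ h)
  have step : ∀ {e x y : HKK}, e * x * e = x * e → e * y * e = y * e →
      e * (x * y) * e = (x * y) * e := by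
    intro e x y hx hy
    calc e * (x * y) * e = e * x * (e * y * e) := by rw [hy]; simp [mul_assoc]
      _ = (e * x * e) * (y * e) := by simp [mul_assoc]
      _ = x * (e * y * e) := by rw [hx]; simp [mul_assoc]
      _ = (x * y) * e := by rw [hy]; simp [mul_assoc]
  induction hz using Submonoid.closure_induction with
  | one =>
    have hc : gc * gc = gc := by simpa [gc, map_mul] using krel (KRel.idem c)
    have hd : gd * gd = gd := by simpa [gd, map_mul] using krel (KRel.idem d)
    simp [hc, hd]
  | mul x y _ _ ihx ihy => exact ⟨step ihx.1 ihy.1, step ihx.2 ihy.2⟩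
  | mem x hx =>
    rcases hx with rfl | rfl
    · constructor
      · simpa [ga, gc, map_mul, mul_assoc] using (krel KRel.ac₂).symm
      · simpa [ga, gd, map_mul, mul_assoc] using (krel KRel.ad₂).symm
    · constructor
      · simpa [gb, gc, map_mul, mul_assoc] using (krel KRel.bc₂).symm
      · simpa [gb, gd, map_mul, mul_assoc] using (krel KRel.bd₂).symm
end

section
/- In the Hecke–Kiselman monoid H_K of K (vertices a,b,c,d; edges a—b, c—d; arrows a→c, a→d, b→c, b→d), for every element v in the submonoid generated by c and d, one has (a·b)·v·(b·a) = (a·b)·v·a and (b·a)·v·(a·b) = (b·a)·v·b. -/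
open FreeMonoid

open V4

/-- In `H_K`, for every `v` in the submonoid generated by `c` and `d`,
`ab·v·ba = ab·v·a` and `ba·v·ab = ba·v·b`. -/
theorem hkK_abvba (v : HKK) (hv : v ∈ Submonoid.closure {gc, gd}) :
    (ga * gb) * v * (gb * ga) = (ga * gb) * v * ga ∧
    (gb * ga) * v * (ga * gb) = (gb * ga) * v * gb := by
  have hrel : ∀ x y, KRel x y → (Con.mk' (conGen KRel) x = Con.mk' _ y) := by
    intro x y h
    exact (Con.eq _).mpr (ConGen.Rel.of _ _ h)
  have ha2 : ga * ga = ga := hrel _ _ (KRel.idem a)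
  have hb2 : gb * gb = gb := hrel _ _ (KRel.idem b)
  have La : ∀ w ∈ Submonoid.closure {gc, gd}, ga * w = ga * w * ga := by
    intro w hw
    induction hw using Submonoid.closure_induction with
    | mem x hx =>
      rcases hx with h | h <;> subst h
      · exact hrel _ _ KRel.ac₁
      · exact hrel _ _ KRel.ad₁
    | one => simpa using ha2.symm
    | mul x y hx hy ihx ihy =>
      calc ga * (x * y) = ga * x * y := by rw [mul_assoc]
        _ = ga * x * ga * y := by rw [← ihx]
        _ = ga * x * (ga * y * ga) := by rw [mul_assoc, ← ihy]
        _ = ga * x * ga * y * ga := by simp [mul_assoc]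
        _ = ga * (x * y) * ga := by rw [← ihx]; simp [mul_assoc]
  have Lb : ∀ w ∈ Submonoid.closure {gc, gd}, gb * w = gb * w * gb := by
    intro w hw
    induction hw using Submonoid.closure_induction with
    | mem x hx =>
      rcases hx with h | h <;> subst h
      · exact hrel _ _ KRel.bc₁
      · exact hrel _ _ KRel.bd₁
    | one => simpa using hb2.symm
    | mul x y hx hy ihx ihy =>
      calc gb * (x * y) = gb * x * y := by rw [mul_assoc]
        _ = gb * x * gb * y := by rw [← ihx]
        _ = gb * x * (gb * y * gb) := by rw [mul_assoc, ← ihy]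
        _ = gb * x * gb * y * gb := by simp [mul_assoc]
        _ = gb * (x * y) * gb := by rw [← ihx]; simp [mul_assoc]
  constructor
  · calc ga * gb * v * (gb * ga) = ga * (gb * v * gb) * ga := by simp [mul_assoc]
      _ = ga * (gb * v) * ga := by rw [← Lb v hv]
      _ = ga * gb * v * ga := by simp [mul_assoc]
  · calc gb * ga * v * (ga * gb) = gb * (ga * v * ga) * gb := by simp [mul_assoc]
      _ = gb * (ga * v) * gb := by rw [← La v hv]
      _ = gb * ga * v * gb := by simp [mul_assoc]
end
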